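/- Let X be a real Banach space, K ⊆ X convex, A : K → X* of type strict ql and monotone relative to a, with a : K → X continuous on line segments. Then the solution sets of the inverted Stampacchia inequality VI_iS(A,a,K) and of the inverted Minty inequality VI_iM(A,a,K) coincide: {x ∈ K : ∀y ∈ K, ⟨A(y) − A(x), a(x)⟩ ≥ 0} = {x ∈ K : ∀y ∈ K, ⟨A(y) − A(x), a(y)⟩ ≥ 0}. -/

import Mathlib

open Filter Topology

theorem stmt_17 {X : Type*} [NormedAddCommGroup X] [NormedSpace ℝ X] [CompleteSpace X]
    (K : Set X) (hK : Convex ℝ K)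
    (A : X → StrongDual ℝ X) (a : X → X)
    (hsql : ∀ x ∈ K, ∀ y ∈ K, x ≠ y → ∀ z ∈ openSegment ℝ x y, z ∈ K →
      A z ∈ openSegment ℝ (A x) (A y))
    (hmon : ∀ x ∈ K, ∀ y ∈ K, (A x - A y) (a x - a y) ≥ 0)
    (ha : ∀ x ∈ K, ∀ (t : ℕ → ℝ), Tendsto t atTop (𝓝 0) → ∀ y : X,
      (∀ n, x + t n • y ∈ K) → Tendsto (fun n => a (x + t n • y)) atTop (𝓝 (a x))) :
    {x | x ∈ K ∧ ∀ y ∈ K, (A y - A x) (a x) ≥ 0} =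
      {x | x ∈ K ∧ ∀ y ∈ K, (A y - A x) (a y) ≥ 0} := by
  ext x
  simp only [Set.mem_setOf_eq]
  constructor
  · rintro ⟨hx, h⟩
    refine ⟨hx, fun y hy => ?_⟩
    have h1 := h y hy
    have h2 := hmon y hy x hx
    simp only [ContinuousLinearMap.sub_apply, map_sub] at h1 h2 ⊢
    linarith
  · rintro ⟨hx, h⟩
    refine ⟨hx, fun y hy => ?_⟩
    by_cases hxy : x = y
    · subst hxy; simp
    set t : ℕ → ℝ := fun n => 1 / ((n : ℝ) + 2) with htdef
    have ht0 : ∀ n, 0 < t n := fun n => by positivity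
    have ht1 : ∀ n, t n < 1 := fun n => by
      rw [htdef]
      rw [div_lt_one (by positivity)]
      have : (0:ℝ) ≤ (n:ℝ) := Nat.cast_nonneg n
      linarith
    have htend : Tendsto t atTop (𝓝 0) := by
      have h1 : Tendsto (fun n : ℕ => (n : ℝ) + 2) atTop atTop :=
        tendsto_atTop_add_const_right _ 2 tendsto_natCast_atTop_atTop
      have := h1.inv_tendsto_atTop
      simpa [htdef, one_div, Pi.inv_def] using this
    have hz : ∀ n, x + t n • (y - x) ∈ K := by
      intro n
      have hmem := hK hx hy (by linarith [ht0 n, ht1 n] : (0:ℝ) ≤ 1 - t n)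
        (le_of_lt (ht0 n)) (by ring)
      have : (1 - t n) • x + t n • y = x + t n • (y - x) := by module
      rwa [this] at hmem
    have key : ∀ n, 0 ≤ (A y - A x) (a (x + t n • (y - x))) := by
      intro n
      set z := x + t n • (y - x) with hzdef
      have hzseg : z ∈ openSegment ℝ x y := by
        refine ⟨1 - t n, t n, by linarith [ht1 n], ht0 n, by ring, ?_⟩
        rw [hzdef]; module
      obtain ⟨s, b, hs, hb, hsb, heq⟩ := hsql x hx y hy hxy z hzseg (hz n)
      have hAz : A z - A x = b • (A y - A x) := by
        have hs' : s = 1 - b := by linarith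
        rw [← heq, hs']; module
      have hminty := h z (hz n)
      rw [hAz] at hminty
      simp only [ContinuousLinearMap.smul_apply, smul_eq_mul] at hminty
      nlinarith
    have hconv : Tendsto (fun n => a (x + t n • (y - x))) atTop (𝓝 (a x)) :=
      ha x hx t htend (y - x) hz
    have hlim : Tendsto (fun n => (A y - A x) (a (x + t n • (y - x)))) atTop
        (𝓝 ((A y - A x) (a x))) := ((A y - A x).continuous.tendsto _).comp hconv
    exact ge_of_tendsto' hlim key
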